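/- Fix a nonnegative integer d. For each positive integer k, let D_k denote the set of lattice paths from (0,0) to (k+1, k) consisting of unit up-steps and unit right-steps such that every lattice point (a, b) visited by the path satisfies b·(k+1) ≥ a·k, and for a path p let V_d(p) denote the number of lattice points (a, b) visited by p with b − a = d. Then the average (∑_{p ∈ D_k} V_d(p)) / |D_k| converges to 4d + 4 as k → ∞. -/

import Mathlib

open Classical in
/-- The set of rational Dyck paths from `(0,0)` to `(k+1, k)`, encoded as words
of `2k+1` steps (`true` = unit up-step, `false` = unit right-step) with exactly
`k` up-steps, such that every visited lattice point `(a, b)` (given by prefix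
counts) satisfies `b * (k+1) ≥ a * k`. -/
noncomputable def DyckPathsToNextToDiag (k : ℕ) : Finset (Fin (2 * k + 1) → Bool) :=
  Finset.univ.filter (fun f =>
    (List.ofFn f).count true = k ∧
      ∀ j : ℕ, ((List.ofFn f).take j).count true * (k + 1) ≥
        ((List.ofFn f).take j).count false * k)

open Classical in
/-- The number of lattice points `(a, b)` visited by the path `f` lying on the
line `b − a = d`; the visited points are exactly the prefix count pairs. -/
noncomputable def visitsToLine (k d : ℕ) (f : Fin (2 * k + 1) → Bool) : ℕ :=
  ((Finset.range (2 * k + 2)).filter (fun j =>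
    ((((List.ofFn f).take j).count true : ℤ) -
      (((List.ofFn f).take j).count false : ℤ) = (d : ℤ)))).card


namespace AuxV
open List Finset Filter

def ht (l : List Bool) : ℤ := (l.count true : ℤ) - (l.count false : ℤ)

def Ok (l : List Bool) : Prop := ∀ j : ℕ, 0 ≤ ht (l.take j)

open Classical in
noncomputable def W (n t : ℕ) : Finset (List Bool) :=
  ((Finset.univ : Finset (Fin n → Bool)).image List.ofFn).filter
    (fun l => l.count true = t ∧ Ok l)

def bb (n t : ℕ) : ℕ := if n ≤ 2*t then n.choose t - n.choose (t+1) else 0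

open Classical in
noncomputable def vd (d n : ℕ) (u : List Bool) : ℕ :=
  ((Finset.range n).filter (fun j => ht (u.take j) = (d : ℤ))).card

def rc (v : List Bool) : List Bool := (v.map (fun b => !b)).reverse

lemma count_add_count (l : List Bool) : l.count true + l.count false = l.length := by
  induction l with
  | nil => simp
  | cons b l ih => cases b <;> simp [List.count_cons] <;> omega

lemma two_count (l : List Bool) : (2 * (l.count true) : ℤ) = l.length + ht l := by
  have := count_add_count l
  simp only [ht]
  push_cast
  omega

@[simp] lemma ht_nil : ht [] = 0 := by simp [ht]

lemma ht_append (a b : List Bool) : ht (a ++ b) = ht a + ht b := by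
  simp [ht, List.count_append]; ring

lemma mem_W {n t : ℕ} {l : List Bool} :
    l ∈ W n t ↔ l.length = n ∧ l.count true = t ∧ Ok l := by
  simp only [W, Finset.mem_filter, Finset.mem_image, Finset.mem_univ, true_and]
  constructor
  · rintro ⟨⟨f, rfl⟩, h2⟩
    exact ⟨by simp, h2⟩
  · rintro ⟨h1, h2⟩
    refine ⟨⟨fun i => l[(i : ℕ)]'(by omega), ?_⟩, h2⟩
    apply List.ext_getElem <;> simp [h1]

lemma ht_take_of_le {l : List Bool} {j : ℕ} (h : l.length ≤ j) : ht (l.take j) = ht l := by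
  rw [List.take_of_length_le h]

lemma ok_ht_nonneg {l : List Bool} (h : Ok l) : 0 ≤ ht l := by
  have := h l.length
  rwa [List.take_length] at this

lemma ht_take_append (a b : List Bool) (j : ℕ) :
    ht ((a ++ b).take j) = ht (a.take j) + ht (b.take (j - a.length)) := by
  rw [List.take_append, ht_append]

lemma ok_append_singleton {l : List Bool} {x : Bool} :
    Ok (l ++ [x]) ↔ Ok l ∧ 0 ≤ ht l + ht [x] := by
  constructor
  · intro h
    constructor
    · intro j
      rcases le_or_gt j l.length with hj | hj
      · have := h j
        rwa [ht_take_append, Nat.sub_eq_zero_of_le hj, List.take_zero, ht_nil, add_zero] at this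
      · rw [ht_take_of_le (le_of_lt hj)]
        have := h l.length
        rwa [List.take_append_of_le_length le_rfl, List.take_length] at this
    · have := h (l.length + 1)
      rwa [ht_take_append, Nat.add_sub_cancel_left, List.take_of_length_le (by simp),
        List.take_of_length_le (by simp)] at this
  · rintro ⟨h1, h2⟩ j
    rw [ht_take_append]
    rcases Nat.eq_zero_or_pos (j - l.length) with hj | hj
    · rw [hj, List.take_zero, ht_nil, add_zero]; exact h1 j
    · rw [List.take_of_length_le (show [x].length ≤ j - l.length by simp; omega),
        ht_take_of_le (by omega)]
      exact h2

lemma choose_anti {n t : ℕ} (h : n ≤ 2*t) : n.choose (t+1) ≤ n.choose t := by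
  rcases le_or_gt (t+1) n with h1 | h1
  · have ht_le : t ≤ n := by omega
    rw [← Nat.choose_symm h1, ← Nat.choose_symm ht_le]
    have heq : n - (t+1) + 1 = n - t := by omega
    calc n.choose (n - (t+1)) ≤ n.choose (n - (t+1) + 1) := by
          apply Nat.choose_le_succ_of_lt_half_left
          omega
      _ = n.choose (n - t) := by rw [heq]
  · rw [Nat.choose_eq_zero_of_lt h1]; exact Nat.zero_le _



lemma ht_eq_of_mem_W {n t : ℕ} {l : List Bool} (h : l ∈ W n t) :
    ht l = 2 * (t : ℤ) - n := by
  rw [mem_W] at h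
  have := two_count l
  rw [h.1, h.2.1] at this
  omega

lemma W_eq_empty {n t : ℕ} (h : 2*t < n) : W n t = ∅ := by
  rw [Finset.eq_empty_iff_forall_notMem]
  intro l hl
  have h1 := ht_eq_of_mem_W hl
  have h2 := ok_ht_nonneg (mem_W.mp hl).2.2
  omega

lemma W_zero_zero : W 0 0 = {[]} := by
  ext l
  simp only [mem_W, Finset.mem_singleton, List.length_eq_zero_iff]
  constructor
  · rintro ⟨rfl, -⟩; rfl
  · rintro rfl
    exact ⟨rfl, rfl, fun j => by simp⟩

lemma W_succ {n t : ℕ} (h : n + 1 ≤ 2*t) :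
    W (n+1) t = ((W n (t-1)).image (· ++ [true])) ∪ ((W n t).image (· ++ [false])) := by
  have ht1 : 1 ≤ t := by omega
  ext l
  simp only [Finset.mem_union, Finset.mem_image, mem_W]
  constructor
  · rintro ⟨hlen, hcnt, hok⟩
    rcases List.eq_nil_or_concat l with rfl | ⟨u, x, rfl⟩
    · simp at hlen
    · rw [List.concat_eq_append] at *
      have hu : u.length = n := by simpa using hlen
      rw [ok_append_singleton] at hok
      cases x
      · right
        refine ⟨u, ⟨hu, ?_, hok.1⟩, rfl⟩
        simpa using hcnt
      · left
        refine ⟨u, ⟨hu, ?_, hok.1⟩, rfl⟩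
        have : u.count true + 1 = t := by simpa using hcnt
        omega
  · rintro (⟨u, ⟨hlen, hcnt, hok⟩, rfl⟩ | ⟨u, ⟨hlen, hcnt, hok⟩, rfl⟩)
    · have hht : ht u = 2*((t:ℤ)-1) - n := by
        have := two_count u
        rw [hlen, hcnt] at this
        omega
      have hc : (u ++ [true]).count true = u.count true + 1 := by simp
      refine ⟨by simpa using hlen, by rw [hc, hcnt]; omega, ?_⟩
      rw [ok_append_singleton]
      refine ⟨hok, ?_⟩
      have : ht [true] = 1 := by simp [ht]
      rw [this]
      have := ok_ht_nonneg hok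
      omega
    · have hht : ht u = 2*(t:ℤ) - n := by
        have := two_count u
        rw [hlen, hcnt] at this
        omega
      refine ⟨by simpa using hlen, by simpa using hcnt, ?_⟩
      rw [ok_append_singleton]
      refine ⟨hok, ?_⟩
      have : ht [false] = -1 := by simp [ht]
      rw [this]
      omega

lemma card_W (n t : ℕ) : (W n t).card = bb n t := by
  induction n generalizing t with
  | zero =>
    rcases t with _ | t
    · rw [W_zero_zero]; simp [bb]
    · have : W 0 (t+1) = ∅ := by
        rw [Finset.eq_empty_iff_forall_notMem]
        intro l hl
        rw [mem_W] at hl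
        obtain ⟨h1, h2, -⟩ := hl
        rw [List.length_eq_zero_iff] at h1
        subst h1
        simp at h2
      rw [this]
      simp [bb, Nat.choose_eq_zero_of_lt]
  | succ n ih =>
    by_cases h : n + 1 ≤ 2*t
    · rw [W_succ h]
      have hdisj : Disjoint ((W n (t-1)).image (· ++ [true])) ((W n t).image (· ++ [false])) := by
        rw [Finset.disjoint_left]
        rintro l hl1 hl2
        simp only [Finset.mem_image] at hl1 hl2
        obtain ⟨u, -, rfl⟩ := hl1
        obtain ⟨v, -, hv⟩ := hl2
        have := congrArg List.getLast? hv
        rw [List.getLast?_concat, List.getLast?_concat] at this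
        simp at this
      rw [Finset.card_union_of_disjoint hdisj,
        Finset.card_image_of_injective _ (List.append_left_injective _),
        Finset.card_image_of_injective _ (List.append_left_injective _), ih, ih]
      -- arithmetic
      obtain ⟨s, rfl⟩ : ∃ s, t = s + 1 := ⟨t - 1, by omega⟩
      simp only [Nat.add_sub_cancel, bb]
      have hp1 : (n+1).choose (s+1) = n.choose s + n.choose (s+1) := Nat.choose_succ_succ _ _
      have hp2 : (n+1).choose (s+2) = n.choose (s+1) + n.choose (s+2) := Nat.choose_succ_succ _ _
      have e2 : n.choose (s+1+1) = n.choose (s+2) := rfl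
      have e3 : (n+1).choose (s+1+1) = (n+1).choose (s+2) := rfl
      by_cases h2 : n ≤ 2*s
      · have a1 := choose_anti h2
        have a2 := choose_anti (show n ≤ 2*(s+1) by omega)
        rw [if_pos h2, if_pos (by omega), if_pos (by omega)]
        omega
      · have hn : n = 2*s + 1 := by omega
        have hsymm : n.choose s = n.choose (s+1) := by
          have := Nat.choose_symm (show s ≤ n by omega)
          rw [show n - s = s + 1 by omega] at this
          omega
        have a2 := choose_anti (show n ≤ 2*(s+1) by omega)
        rw [if_neg h2, if_pos (by omega), if_pos (by omega)]
        omega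
    · rw [W_eq_empty (by omega)]
      simp [bb, h]

lemma cnt_map_not_t (l : List Bool) : (l.map (fun b => !b)).count true = l.count false := by
  induction l with
  | nil => simp
  | cons b l ih => cases b <;> simp [List.count_cons, ih]

lemma cnt_map_not_f (l : List Bool) : (l.map (fun b => !b)).count false = l.count true := by
  induction l with
  | nil => simp
  | cons b l ih => cases b <;> simp [List.count_cons, ih]

lemma rc_rc (v : List Bool) : rc (rc v) = v := by
  simp [rc, List.map_reverse, List.map_map, Function.comp_def]

@[simp] lemma length_rc (v : List Bool) : (rc v).length = v.length := by simp [rc]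

lemma ht_rc (v : List Bool) : ht (rc v) = - ht v := by
  simp [rc, ht, List.count_reverse, cnt_map_not_t, cnt_map_not_f]

lemma rc_take (v : List Bool) (s : ℕ) : (rc v).take s = rc (v.drop (v.length - s)) := by
  simp only [rc]
  rw [List.take_reverse]
  congr 1
  rw [← List.map_drop]
  simp

lemma ht_drop (v : List Bool) (a : ℕ) : ht (v.drop a) = ht v - ht (v.take a) := by
  have := ht_append (v.take a) (v.drop a)
  rw [List.take_append_drop] at this
  omega

lemma ht_rc_take (v : List Bool) (s : ℕ) :
    ht ((rc v).take s) = ht (v.take (v.length - s)) - ht v := by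
  rw [rc_take, ht_rc, ht_drop]; ring

lemma ht_take_drop (w : List Bool) (a t : ℕ) (h : a ≤ w.length) :
    ht (w.take (a + t)) = ht (w.take a) + ht ((w.drop a).take t) := by
  conv_lhs => rw [← List.take_append_drop a w]
  rw [List.take_append]
  have hlen : (w.take a).length = a := by simp [h]
  rw [ht_append, List.take_of_length_le (by omega), hlen, Nat.add_sub_cancel_left]

lemma ivt (f : ℕ → ℤ) (hstep : ∀ i, f (i+1) ≤ f i + 1) (c : ℤ) (n : ℕ)
    (h0 : f 0 ≤ c) (hn : c ≤ f n) : ∃ i ≤ n, f i = c := by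
  induction n with
  | zero => exact ⟨0, le_rfl, le_antisymm h0 hn⟩
  | succ n ih =>
    rcases le_or_gt c (f n) with h | h
    · obtain ⟨i, hi, hf⟩ := ih h
      exact ⟨i, by omega, hf⟩
    · have := hstep n
      exact ⟨n+1, le_rfl, by omega⟩

lemma ht_take_succ (w : List Bool) (i : ℕ) :
    ht (w.take (i+1)) ≤ ht (w.take i) + 1 ∧ ht (w.take i) ≤ ht (w.take (i+1)) + 1 := by
  rcases lt_or_ge i w.length with h | h
  · rw [List.take_succ, List.getElem?_eq_getElem h]
    cases hwi : w[i] <;> simp [ht_append, ht] <;> omega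
  · rw [List.take_of_length_le h, List.take_of_length_le (by omega)]
    omega



lemma ofFn_getElem_eq {n : ℕ} {w : List Bool} (h : w.length = n) :
    List.ofFn (fun i : Fin n => w[(i:ℕ)]'(by omega)) = w := by
  subst h
  exact List.ofFn_getElem

lemma visits_eq (k d : ℕ) (f : Fin (2*k+1) → Bool) :
    visitsToLine k d f = vd d (2*k+2) (List.ofFn f) := by
  unfold visitsToLine vd
  congr 1

lemma mem_dyck_image {k : ℕ} {w : List Bool} :
    w ∈ (DyckPathsToNextToDiag k).image List.ofFn ↔
      w.length = 2*k+1 ∧ w.count true = k ∧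
      (∀ j : ℕ, (w.take j).count false * k ≤ (w.take j).count true * (k+1)) := by
  simp only [DyckPathsToNextToDiag, Finset.mem_image, Finset.mem_filter, Finset.mem_univ,
    true_and, ge_iff_le]
  constructor
  · rintro ⟨f, ⟨h1, h2⟩, rfl⟩
    exact ⟨by simp, h1, h2⟩
  · rintro ⟨h1, h2, h3⟩
    have hw : List.ofFn (fun i : Fin (2*k+1) => w[(i:ℕ)]'(by omega)) = w := ofFn_getElem_eq h1
    exact ⟨fun i => w[(i : ℕ)]'(by omega), ⟨by rw [hw]; exact h2, by rw [hw]; exact h3⟩, hw⟩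

lemma dyck_image_eq (k : ℕ) :
    (DyckPathsToNextToDiag k).image List.ofFn = (W (2*k) k).image (· ++ [false]) := by
  ext w
  rw [mem_dyck_image]
  simp only [Finset.mem_image]
  constructor
  · rintro ⟨h1, h2, h3⟩
    -- step 1
    have step1 : ∀ j, j ≤ 2*k → (w.take j).count false ≤ (w.take j).count true := by
      intro j hj
      by_contra hc
      push_neg at hc
      have hTF := count_add_count (w.take j)
      have hlen : (w.take j).length = j := by simp [h1]; omega
      have hTle : (w.take j).count true ≤ k := by
        have := List.Sublist.count_le true (List.take_sublist j w)
        omega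
      have := h3 j
      nlinarith [this, hc, hTF, hlen, hTle]
    -- step 2
    have hlen2k : (w.take (2*k)).length = 2*k := by simp [h1]
    have step2 : (w.take (2*k)).count true = k := by
      have h0 := step1 (2*k) le_rfl
      have hTF := count_add_count (w.take (2*k))
      have hTle : (w.take (2*k)).count true ≤ k := by
        have := List.Sublist.count_le true (List.take_sublist (2*k) w)
        omega
      omega
    -- step 3 & 4
    have hdrop : w.drop (2*k) = [w[2*k]'(by omega)] := by
      rw [List.drop_eq_getElem_cons (by omega)]
      congr 1
      apply List.drop_eq_nil_of_le
      omega
    have hsplit : w = w.take (2*k) ++ [w[2*k]'(by omega)] := by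
      rw [← hdrop, List.take_append_drop]
    have hfalse : w[2*k]'(by omega) = false := by
      by_contra hc
      have : w[2*k]'(by omega) = true := by simpa using hc
      rw [this] at hsplit
      have := congrArg (List.count true) hsplit
      rw [List.count_append, step2] at this
      simp at this
      omega
    refine ⟨w.take (2*k), mem_W.mpr ⟨hlen2k, step2, ?_⟩, by rw [hfalse] at hsplit; exact hsplit.symm⟩
    -- Ok
    intro j
    rw [List.take_take]
    have hm : min j (2*k) ≤ 2*k := min_le_right _ _
    have := step1 _ hm
    unfold ht
    omega
  · rintro ⟨u, hu, rfl⟩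
    obtain ⟨hlen, hcnt, hok⟩ := mem_W.mp hu
    have hcf : u.count false = k := by
      have := count_add_count u
      omega
    refine ⟨by simp [hlen], by simp [hcnt], ?_⟩
    intro j
    rcases le_or_gt j (2*k) with hj | hj
    · rw [List.take_append_of_le_length (by omega)]
      have := hok j
      unfold ht at this
      have hF : (u.take j).count false ≤ (u.take j).count true := by omega
      calc (u.take j).count false * k ≤ (u.take j).count true * k := Nat.mul_le_mul_right _ hF
        _ ≤ (u.take j).count true * (k+1) := Nat.mul_le_mul_left _ (by omega)
    · rw [List.take_of_length_le (by simp [hlen]; omega)]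
      have e1 : (u ++ [false]).count true = k := by simp [List.count_append, hcnt]
      have e2 : (u ++ [false]).count false = k + 1 := by simp [List.count_append, hcf]
      rw [e1, e2, Nat.mul_comm]

lemma card_dyck (k : ℕ) : (DyckPathsToNextToDiag k).card = bb (2*k) k := by
  have h1 : ((DyckPathsToNextToDiag k).image List.ofFn).card = (DyckPathsToNextToDiag k).card :=
    Finset.card_image_of_injective _ List.ofFn_injective
  rw [← h1, dyck_image_eq,
    Finset.card_image_of_injective _ (List.append_left_injective _), card_W]

lemma vd_append_false {k d : ℕ} {u : List Bool} (hu : u ∈ W (2*k) k) :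
    vd d (2*k+2) (u ++ [false]) = vd d (2*k+1) u := by
  obtain ⟨hlen, hcnt, hok⟩ := mem_W.mp hu
  unfold vd
  congr 1
  ext j
  simp only [Finset.mem_filter, Finset.mem_range]
  constructor
  · rintro ⟨hj, hh⟩
    rcases lt_or_ge j (2*k+1) with hj2 | hj2
    · refine ⟨hj2, ?_⟩
      rwa [List.take_append_of_le_length (by omega)] at hh
    · exfalso
      have hj3 : j = 2*k+1 := by omega
      rw [hj3, ht_take_of_le (by simp [hlen])] at hh
      rw [ht_append] at hh
      have h0 : ht u = 0 := by
        have := count_add_count u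
        unfold ht
        omega
      have : ht [false] = -1 := by simp [ht]
      rw [h0, this] at hh
      omega
  · rintro ⟨hj, hh⟩
    refine ⟨by omega, ?_⟩
    rwa [List.take_append_of_le_length (by omega)]

lemma sum_visits_eq (k d : ℕ) :
    ∑ p ∈ DyckPathsToNextToDiag k, visitsToLine k d p = ∑ u ∈ W (2*k) k, vd d (2*k+1) u := by
  have h1 : ∑ p ∈ DyckPathsToNextToDiag k, visitsToLine k d p
      = ∑ w ∈ (DyckPathsToNextToDiag k).image List.ofFn, vd d (2*k+2) w := by
    rw [Finset.sum_image (fun a _ b _ h => List.ofFn_injective h)]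
    exact Finset.sum_congr rfl (fun f _ => visits_eq k d f)
  rw [h1, dyck_image_eq,
    Finset.sum_image (fun a _ b _ h => List.append_left_injective _ h)]
  exact Finset.sum_congr rfl (fun u hu => vd_append_false hu)



lemma ht_cons (x : Bool) (l : List Bool) : ht (x :: l) = ht [x] + ht l := ht_append [x] l

@[simp] lemma ht_true : ht [true] = 1 := by simp [ht]
@[simp] lemma ht_false : ht [false] = -1 := by simp [ht]

open Classical in
noncomputable def lastd (d : ℕ) (w : List Bool) : ℕ :=
  WithBot.unbotD 0 (((Finset.range (w.length+1)).filter (fun i => ht (w.take i) = (d:ℤ))).max)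

open Classical in
lemma lastd_eq {d : ℕ} {w : List Bool} {j : ℕ} (hj : j ≤ w.length) (hd : ht (w.take j) = (d:ℤ))
    (hmax : ∀ i, j < i → i ≤ w.length → ht (w.take i) ≠ (d:ℤ)) : lastd d w = j := by
  have hmem : j ∈ (Finset.range (w.length+1)).filter (fun i => ht (w.take i) = (d:ℤ)) := by
    simp only [Finset.mem_filter, Finset.mem_range]
    exact ⟨by omega, hd⟩
  have hle : ∀ b ∈ (Finset.range (w.length+1)).filter (fun i => ht (w.take i) = (d:ℤ)), b ≤ j := by
    intro b hb
    simp only [Finset.mem_filter, Finset.mem_range] at hb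
    by_contra hc
    exact hmax b (by omega) (by omega) hb.2
  have hmax' : (((Finset.range (w.length+1)).filter (fun i => ht (w.take i) = (d:ℤ))).max) = (j : WithBot ℕ) := by
    apply _root_.le_antisymm
    · exact Finset.max_le (fun b hb => WithBot.coe_le_coe.mpr (hle b hb))
    · exact Finset.le_max hmem
  rw [lastd, hmax']
  rfl

open Classical in
lemma lastd_spec {d : ℕ} {w : List Bool} (hne : ∃ i, i ≤ w.length ∧ ht (w.take i) = (d:ℤ)) :
    lastd d w ≤ w.length ∧ ht (w.take (lastd d w)) = (d:ℤ) ∧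
      ∀ i, lastd d w < i → i ≤ w.length → ht (w.take i) ≠ (d:ℤ) := by
  classical
  set s := (Finset.range (w.length+1)).filter (fun i => ht (w.take i) = (d:ℤ)) with hs
  have hne' : s.Nonempty := by
    obtain ⟨i, hi1, hi2⟩ := hne
    exact ⟨i, by simp only [hs, Finset.mem_filter, Finset.mem_range]; exact ⟨by omega, hi2⟩⟩
  have hl : lastd d w = s.max' hne' := by
    rw [lastd, ← hs, ← Finset.coe_max' hne']
    rfl
  have hmem := Finset.max'_mem s hne'
  rw [← hl] at hmem
  simp only [hs, Finset.mem_filter, Finset.mem_range] at hmem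
  refine ⟨by omega, hmem.2, ?_⟩
  intro i hi1 hi2 hi3
  have : i ∈ s := by simp only [hs, Finset.mem_filter, Finset.mem_range]; exact ⟨by omega, hi3⟩
  have := Finset.le_max' s i this
  rw [← hl] at this
  omega

/-- heights of `a ++ true :: rc v` -/
lemma ht_phi_take (a v : List Bool) (i : ℕ) (hij : a.length < i) :
    ht ((a ++ true :: rc v).take i) =
      ht a + 1 + ht (v.take (v.length - (i - a.length - 1))) - ht v := by
  rw [ht_take_append, List.take_of_length_le (by omega)]
  generalize hs : i - a.length - 1 = s
  have h1 : i - a.length = s + 1 := by omega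
  rw [h1, List.take_succ_cons, ht_cons, ht_true, ht_rc_take]
  ring

/-- heights of `a ++ rc v` -/
lemma ht_psi_take (a v : List Bool) (i : ℕ) (hij : a.length ≤ i) :
    ht ((a ++ rc v).take i) =
      ht a + ht (v.take (v.length - (i - a.length))) - ht v := by
  rw [ht_take_append, List.take_of_length_le (by omega), ht_rc_take]
  ring

lemma take_take_eq {u : List Bool} {j i : ℕ} (h : i ≤ j) : (u.take j).take i = u.take i := by
  rw [List.take_take, min_eq_left h]

section main
variable {k d : ℕ}

open Classical in
noncomputable def Sd (k d : ℕ) : Finset (List Bool × ℕ) :=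
  ((W (2*k) k) ×ˢ Finset.range (2*k+1)).filter (fun z => ht (z.1.take z.2) = (d:ℤ))

noncomputable def phi (z : List Bool × ℕ) : List Bool := z.1.take z.2 ++ true :: rc (z.1.drop z.2)

open Classical in
noncomputable def psi (d : ℕ) (w : List Bool) : List Bool × ℕ :=
  (w.take (lastd d w) ++ rc (w.drop (lastd d w + 1)), lastd d w)

lemma phi_spec {u : List Bool} {j : ℕ} (hu : u ∈ W (2*k) k) (hj : j ≤ 2*k)
    (hd : ht (u.take j) = (d:ℤ)) :
    (phi (u,j)).length = 2*k+1 ∧ (phi (u,j)).count true = k+d+1 ∧ Ok (phi (u,j)) ∧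
      (∀ i, j < i → (d:ℤ) + 1 ≤ ht ((phi (u,j)).take i)) ∧
      (phi (u,j)).take j = u.take j ∧ (phi (u,j)).drop (j+1) = rc (u.drop j) := by
  obtain ⟨hlen, hcnt, hok⟩ := mem_W.mp hu
  have htu : ht u = 0 := by
    have := two_count u
    rw [hlen, hcnt] at this
    omega
  set a := u.take j with ha
  set v := u.drop j with hv
  have hal : a.length = j := by simp [ha, hlen]; omega
  have hvl : v.length = 2*k - j := by simp [hv, hlen]
  have hhv : ht v = -(d:ℤ) := by rw [hv, ht_drop, htu, hd]; ring
  have hw : phi (u,j) = a ++ true :: rc v := rfl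
  have hwl : (phi (u,j)).length = 2*k+1 := by
    simp [hw, hal, hvl]
    omega
  -- heights above j
  have hhigh : ∀ i, j < i → (d:ℤ) + 1 ≤ ht ((phi (u,j)).take i) := by
    intro i hi
    rw [hw, ht_phi_take a v i (by omega)]
    set t := v.length - (i - a.length - 1) with hts
    have htv : ht (v.take t) = ht (u.take (j + t)) - (d:ℤ) := by
      rw [hv, ← hd, ht_take_drop u j t (by omega)]
      ring
    have := hok (j + t)
    rw [ha, hd, hhv, htv]
    omega
  -- total height
  have hhw : ht (phi (u,j)) = 2*(d:ℤ)+1 := by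
    rw [hw, ht_append, ht_cons, ht_true, ht_rc, hhv, hd]
    ring
  -- count
  have hcntw : (phi (u,j)).count true = k+d+1 := by
    have := two_count (phi (u,j))
    rw [hwl, hhw] at this
    push_cast at this
    omega
  -- Ok
  have hOk : Ok (phi (u,j)) := by
    intro i
    rcases le_or_gt i j with hi | hi
    · rw [hw, List.take_append_of_le_length (by omega), ha, take_take_eq hi]
      exact hok i
    · have := hhigh i hi
      have : (0:ℤ) ≤ (d:ℤ) + 1 := by positivity
      omega
  -- take j
  have htake : (phi (u,j)).take j = u.take j := by
    rw [hw, List.take_append_of_le_length (by omega), ← ha, ← hal, List.take_length]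
  -- drop (j+1)
  have hdrop : (phi (u,j)).drop (j+1) = rc (u.drop j) := by
    rw [hw, List.append_cons, ← hv]
    have : (a ++ [true]).length = j + 1 := by simp [hal]
    rw [← this, List.drop_left]
  exact ⟨hwl, hcntw, hOk, hhigh, htake, hdrop⟩

lemma phi_mem {z : List Bool × ℕ} (hz : z ∈ Sd k d) : phi z ∈ W (2*k+1) (k+d+1) := by
  obtain ⟨u, j⟩ := z
  simp only [Sd, Finset.mem_filter, Finset.mem_product, Finset.mem_range] at hz
  obtain ⟨⟨hu, hj⟩, hd⟩ := hz
  obtain ⟨h1, h2, h3, -, -, -⟩ := phi_spec (d := d) hu (by omega) hd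
  exact mem_W.mpr ⟨h1, h2, h3⟩

lemma phi_lastd {z : List Bool × ℕ} (hz : z ∈ Sd k d) : lastd d (phi z) = z.2 := by
  obtain ⟨u, j⟩ := z
  simp only [Sd, Finset.mem_filter, Finset.mem_product, Finset.mem_range] at hz
  obtain ⟨⟨hu, hj⟩, hd⟩ := hz
  obtain ⟨h1, -, -, hhigh, htake, -⟩ := phi_spec (d := d) hu (by omega) hd
  apply lastd_eq (by omega)
  · rw [htake]; exact hd
  · intro i hi1 hi2
    have := hhigh i hi1
    omega

lemma psi_phi {z : List Bool × ℕ} (hz : z ∈ Sd k d) : psi d (phi z) = z := by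
  obtain ⟨u, j⟩ := z
  have hl := phi_lastd hz
  simp only [Sd, Finset.mem_filter, Finset.mem_product, Finset.mem_range] at hz
  obtain ⟨⟨hu, hj⟩, hd⟩ := hz
  obtain ⟨-, -, -, -, htake, hdrop⟩ := phi_spec (d := d) hu (by omega) hd
  simp only [psi, hl, htake, hdrop, rc_rc]
  rw [List.take_append_drop]

lemma psi_spec {w : List Bool} (hw : w ∈ W (2*k+1) (k+d+1)) :
    psi d w ∈ Sd k d ∧ phi (psi d w) = w := by
  obtain ⟨hlen, hcnt, hok⟩ := mem_W.mp hw
  have hhw : ht w = 2*(d:ℤ)+1 := by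
    have := two_count w
    rw [hlen, hcnt] at this
    push_cast at this
    omega
  -- existence of a visit
  have hne : ∃ i, i ≤ w.length ∧ ht (w.take i) = (d:ℤ) := by
    obtain ⟨i, hi, hif⟩ := ivt (fun i => ht (w.take i)) (fun i => (ht_take_succ w i).1)
      ((d:ℤ)) w.length (by show ht (w.take 0) ≤ (d:ℤ); simp)
      (by show (d:ℤ) ≤ ht (w.take w.length); rw [List.take_length, hhw]; omega)
    exact ⟨i, hi, hif⟩
  obtain ⟨hjle, hjht, hjmax⟩ := lastd_spec hne
  set j := lastd d w with hjdef
  -- j < length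
  have hjlt : j < w.length := by
    rcases eq_or_lt_of_le hjle with h | h
    · exfalso
      rw [h, List.take_length, hhw] at hjht
      omega
    · exact h
  -- heights after j
  have hhigh : ∀ i, j < i → i ≤ w.length → (d:ℤ) + 1 ≤ ht (w.take i) := by
    intro i hi1 hi2
    by_contra hc
    push_neg at hc
    obtain ⟨t, ht1, ht2⟩ := ivt (fun t => ht (w.take (i + t))) (fun t => by
        show ht (w.take (i + (t+1))) ≤ ht (w.take (i+t)) + 1
        rw [show i + (t+1) = (i+t)+1 by omega]
        exact (ht_take_succ w _).1)
      ((d:ℤ)) (w.length - i)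
      (by show ht (w.take (i+0)) ≤ (d:ℤ); rw [Nat.add_zero]; omega)
      (by show (d:ℤ) ≤ ht (w.take (i + (w.length - i)))
          rw [show i + (w.length - i) = w.length by omega, List.take_length, hhw]; omega)
    exact hjmax (i + t) (by omega) (by omega) ht2
  -- the letter at j is true
  have hj1 : ht (w.take (j+1)) = (d:ℤ) + 1 := by
    have h1 := hhigh (j+1) (by omega) (by omega)
    have h2 := (ht_take_succ w j).1
    rw [hjht] at h2
    omega
  -- pieces
  set a := w.take j with hadef
  set v := w.drop (j+1) with hvdef
  have hal : a.length = j := by simp [hadef]; omega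
  have hvl : v.length = w.length - (j+1) := by simp [hvdef]
  have hhv : ht v = (d:ℤ) := by
    rw [hvdef, ht_drop, hhw, hj1]
    ring
  set u := a ++ rc v with hudef
  have hul : u.length = 2*k := by
    simp [hudef, hal, hvl]
    omega
  have hhu : ht u = 0 := by
    rw [hudef, ht_append, ht_rc, hjht, hhv]
    ring
  have hcu : u.count true = k := by
    have := two_count u
    rw [hul, hhu] at this
    push_cast at this
    omega
  have hta : ht a = (d:ℤ) := hjht
  -- u take j = a
  have hutake : u.take j = a := by
    rw [hudef, List.take_append_of_le_length (by omega), ← hal, List.take_length]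
  -- Ok u
  have hOku : Ok u := by
    intro i
    rcases le_or_gt i j with hi | hi
    · rw [hudef, List.take_append_of_le_length (by omega), hadef, take_take_eq hi]
      exact hok i
    · rcases le_or_gt i u.length with hi2 | hi2
      · rw [hudef, ht_psi_take a v i (by omega)]
        set t := v.length - (i - a.length) with htdef
        have htv : ht (v.take t) = ht (w.take (j + 1 + t)) - ((d:ℤ)+1) := by
          rw [hvdef, ← hj1, ht_take_drop w (j+1) t (by omega)]
          ring
        have hge := hhigh (j+1+t) (by omega) (by omega)
        rw [hta, hhv, htv]
        omega
      · rw [ht_take_of_le (by omega), hhu]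
  -- u mem W
  have humem : u ∈ W (2*k) k := mem_W.mpr ⟨hul, hcu, hOku⟩
  -- phi (psi w) = w
  have hwj : w[j]'(hjlt) = true := by
    have := List.take_succ (l := w) (i := j)
    rw [List.getElem?_eq_getElem hjlt] at this
    have h2 : ht (w.take (j+1)) = ht (w.take j) + ht [w[j]'(hjlt)] := by
      rw [this, ht_append]
      simp
    rw [hj1, hjht] at h2
    cases h : w[j]'(hjlt)
    · rw [h] at h2
      simp [ht] at h2
    · rfl
  have hudrop : u.drop j = rc v := by
    rw [hudef, ← hal, List.drop_left]
  have hphi : phi (psi d w) = w := by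
    have hpsi : psi d w = (u, j) := by
      simp only [psi, ← hjdef, ← hadef, ← hvdef, ← hudef]
    rw [hpsi]
    show u.take j ++ true :: rc (u.drop j) = w
    rw [hutake, hudrop, rc_rc, ← hwj]
    rw [hadef, hvdef]
    conv_rhs => rw [← List.take_append_drop j w]
    congr 1
    exact (List.drop_eq_getElem_cons hjlt).symm
  refine ⟨?_, hphi⟩
  have hpsi : psi d w = (u, j) := by
    simp only [psi, ← hjdef, ← hadef, ← hvdef, ← hudef]
  rw [hpsi]
  simp only [Sd, Finset.mem_filter, Finset.mem_product, Finset.mem_range]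
  refine ⟨⟨humem, by omega⟩, ?_⟩
  rw [hutake, hta]

lemma card_Sd (k d : ℕ) : (Sd k d).card = (W (2*k+1) (k+d+1)).card := by
  apply Finset.card_nbij' phi (psi d)
  · exact fun z hz => phi_mem hz
  · exact fun w hw => (psi_spec hw).1
  · exact fun z hz => psi_phi hz
  · exact fun w hw => (psi_spec hw).2

lemma sum_vd_eq (k d : ℕ) : ∑ u ∈ W (2*k) k, vd d (2*k+1) u = (Sd k d).card := by
  classical
  rw [Sd, Finset.card_filter, Finset.sum_product]
  apply Finset.sum_congr rfl
  intro u _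
  rw [vd, Finset.card_filter]

end main

-- I1
lemma I1 (k : ℕ) : bb (2*k) k * (k+1) = (2*k).choose k := by
  rw [bb, if_pos le_rfl]
  have hmono := choose_anti (le_refl (2*k))
  have hid := Nat.choose_succ_right_eq (2*k) k
  rw [show 2*k - k = k by omega] at hid
  have hid' : ((2*k).choose (k+1) : ℤ) * (k+1) = (2*k).choose k * k := by exact_mod_cast hid
  zify [hmono]
  linear_combination -hid'

lemma bb_pos (k : ℕ) : 0 < bb (2*k) k := by
  have h1 := I1 k
  have h2 := Nat.choose_pos (show k ≤ 2*k by omega)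
  rcases Nat.eq_zero_or_pos (bb (2*k) k) with h | h
  · rw [h] at h1
    simp at h1
    omega
  · exact h

-- I2
lemma I2 (k d : ℕ) (h : d ≤ k) :
    bb (2*k+1) (k+d+1) * (k+d+2) = (2*k+1).choose (k+d+1) * (2*d+2) := by
  rw [bb, if_pos (by omega)]
  have hmono := choose_anti (show 2*k+1 ≤ 2*(k+d+1) by omega)
  have hid := Nat.choose_succ_right_eq (2*k+1) (k+d+1)
  rw [show 2*k+1 - (k+d+1) = k - d by omega] at hid
  have hid' : ((2*k+1).choose (k+d+1+1) : ℤ) * (k+d+1+1) = (2*k+1).choose (k+d+1) * ((k:ℤ) - d) := by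
    have : ((k - d : ℕ) : ℤ) = (k:ℤ) - d := by omega
    exact_mod_cast this ▸ (by exact_mod_cast hid : ((2*k+1).choose (k+d+1+1) : ℤ) * (k+d+1+1) = (2*k+1).choose (k+d+1) * ((k-d : ℕ) : ℤ))
  have e2 : (2*k+1).choose (k+d+1+1) = (2*k+1).choose (k+d+2) := rfl
  zify [hmono]
  rw [← e2]
  linear_combination -hid'

-- I3 telescoping
lemma I3 (k : ℕ) : ∀ d, d ≤ k →
    (2*k+1).choose (k+1+d) * ∏ i ∈ range d, (k+2+i) =
      (2*k+1).choose (k+1) * ∏ i ∈ range d, (k-i) := by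
  intro d
  induction d with
  | zero => simp
  | succ d ih =>
    intro hd
    have ihd := ih (by omega)
    rw [Finset.prod_range_succ, Finset.prod_range_succ]
    have hid := Nat.choose_succ_right_eq (2*k+1) (k+1+d)
    rw [show 2*k+1 - (k+1+d) = k - d by omega] at hid
    have hsub : ((k - d : ℕ) : ℤ) = (k:ℤ) - d := by omega
    have hid' : ((2*k+1).choose (k+1+d+1) : ℤ) * (k+1+d+1) =
        (2*k+1).choose (k+1+d) * ((k:ℤ) - d) := by
      rw [← hsub]; exact_mod_cast hid
    have ihd' : ((2*k+1).choose (k+1+d) : ℤ) * ∏ i ∈ range d, ((k+2+i : ℕ) : ℤ) =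
        (2*k+1).choose (k+1) * ∏ i ∈ range d, ((k-i : ℕ) : ℤ) := by exact_mod_cast ihd
    have goal' : ((2*k+1).choose (k+1+(d+1)) : ℤ) * ((∏ i ∈ range d, ((k+2+i:ℕ):ℤ)) * (k+2+d)) =
        (2*k+1).choose (k+1) * ((∏ i ∈ range d, ((k-i:ℕ):ℤ)) * ((k:ℤ)-d)) := by
      have e : (k+1+(d+1)) = (k+1+d+1) := by omega
      rw [e]
      linear_combination (∏ i ∈ range d, ((k+2+i:ℕ):ℤ)) * hid' + ((k:ℤ)-d) * ihd'
    have := goal'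
    rw [← hsub] at this
    exact_mod_cast this

-- I4
lemma I4 (k : ℕ) : (2*k+1).choose (k+1) * (k+1) = (2*k).choose k * (2*k+1) := by
  have h := (Nat.add_one_mul_choose_eq (2*k) k).symm
  rw [h, Nat.mul_comm]

-- master
lemma master (k d : ℕ) (h : d ≤ k) :
    bb (2*k+1) (k+d+1) * ((k+d+2) * (k+1) * ∏ i ∈ range d, (k+2+i)) =
      bb (2*k) k * ((2*d+2) * (2*k+1) * (k+1) * ∏ i ∈ range d, (k-i)) := by
  have h1 := I1 k
  have h2 := I2 k d h
  have h3 := I3 k d h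
  have h4 := I4 k
  have e : k+1+d = k+d+1 := by omega
  rw [e] at h3
  -- cast everything to ℤ
  have h1' : ((bb (2*k) k : ℤ)) * (k+1) = (2*k).choose k := by exact_mod_cast h1
  have h2' : ((bb (2*k+1) (k+d+1) : ℤ)) * (k+d+2) = (2*k+1).choose (k+d+1) * (2*d+2) := by
    exact_mod_cast h2
  have h3' : ((2*k+1).choose (k+d+1) : ℤ) * ∏ i ∈ range d, ((k+2+i:ℕ):ℤ) =
      (2*k+1).choose (k+1) * ∏ i ∈ range d, ((k-i:ℕ):ℤ) := by exact_mod_cast h3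
  have h4' : ((2*k+1).choose (k+1) : ℤ) * (k+1) = (2*k).choose k * (2*k+1) := by exact_mod_cast h4
  have goal' : ((bb (2*k+1) (k+d+1) : ℤ)) * ((k+d+2) * (k+1) * ∏ i ∈ range d, ((k+2+i:ℕ):ℤ)) =
      (bb (2*k) k : ℤ) * ((2*d+2) * (2*k+1) * (k+1) * ∏ i ∈ range d, ((k-i:ℕ):ℤ)) := by
    linear_combination ((k:ℤ)+1) * (∏ i ∈ range d, ((k+2+i:ℕ):ℤ)) * h2'
      + (2*(d:ℤ)+2) * ((k:ℤ)+1) * h3'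
      + (2*(d:ℤ)+2) * (∏ i ∈ range d, ((k-i:ℕ):ℤ)) * h4'
      - (2*(d:ℤ)+2) * (2*(k:ℤ)+1) * (∏ i ∈ range d, ((k-i:ℕ):ℤ)) * h1'
  exact_mod_cast goal'


lemma ratio_tendsto (a b : ℝ) :
    Tendsto (fun k : ℕ => ((k:ℝ)+a)/((k:ℝ)+b)) atTop (nhds 1) := by
  have hb : Tendsto (fun k:ℕ => (k:ℝ)+b) atTop atTop :=
    tendsto_atTop_add_const_right _ b tendsto_natCast_atTop_atTop
  have h0 : Tendsto (fun k:ℕ => (a-b)/((k:ℝ)+b)) atTop (nhds 0) :=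
    Tendsto.div_atTop tendsto_const_nhds hb
  have h1 : Tendsto (fun k:ℕ => 1 + (a-b)/((k:ℝ)+b)) atTop (nhds (1+0)) :=
    tendsto_const_nhds.add h0
  rw [add_zero] at h1
  apply h1.congr'
  filter_upwards [hb.eventually_gt_atTop 0] with k hk
  field_simp
  ring

noncomputable def G (d : ℕ) (k : ℕ) : ℝ :=
  (2*(d:ℝ)+2) * ((2*(k:ℝ)+1)/((k:ℝ)+(d:ℝ)+2)) *
    ∏ i ∈ range d, (((k:ℝ)-(i:ℝ))/((k:ℝ)+2+(i:ℝ)))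

lemma G_tendsto (d : ℕ) : Tendsto (G d) atTop (nhds (4*(d:ℝ)+4)) := by
  have T1 : Tendsto (fun k : ℕ => (2*(k:ℝ)+1)/((k:ℝ)+(d:ℝ)+2)) atTop (nhds 2) := by
    have h := (ratio_tendsto (1/2) ((d:ℝ)+2)).const_mul 2
    rw [mul_one] at h
    apply h.congr
    intro k
    ring
  have T2 : ∀ i : ℕ, Tendsto (fun k : ℕ => ((k:ℝ)-(i:ℝ))/((k:ℝ)+2+(i:ℝ))) atTop (nhds 1) := by
    intro i
    have h := ratio_tendsto (-(i:ℝ)) (2+(i:ℝ))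
    apply h.congr
    intro k
    ring
  have Tprod : Tendsto (fun k : ℕ => ∏ i ∈ range d, (((k:ℝ)-(i:ℝ))/((k:ℝ)+2+(i:ℝ)))) atTop
      (nhds (∏ _i ∈ range d, (1:ℝ))) :=
    tendsto_finset_prod _ (fun i _ => T2 i)
  rw [Finset.prod_const_one] at Tprod
  have := ((tendsto_const_nhds (x := (2*(d:ℝ)+2))).mul T1).mul Tprod
  rw [mul_one] at this
  convert this using 2
  · rfl
  · ring

noncomputable def r (d : ℕ) (k : ℕ) : ℝ := (bb (2*k+1) (k+d+1) : ℝ) / (bb (2*k) k : ℝ)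

lemma r_eq_G {d k : ℕ} (h : d ≤ k) : r d k = G d k := by
  have hm := master k d h
  have hDen : (0:ℝ) < (bb (2*k) k : ℝ) := by exact_mod_cast bb_pos k
  -- real products
  have hprod1 : ((∏ i ∈ range d, (k+2+i) : ℕ) : ℝ) = ∏ i ∈ range d, ((k:ℝ)+2+(i:ℝ)) := by
    push_cast
    rfl
  have hprod2 : ((∏ i ∈ range d, (k-i) : ℕ) : ℝ) = ∏ i ∈ range d, ((k:ℝ)-(i:ℝ)) := by
    rw [Nat.cast_prod]
    apply Finset.prod_congr rfl
    intro i hi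
    rw [Finset.mem_range] at hi
    rw [Nat.cast_sub (by omega)]
  have hfix : ∏ i ∈ range d, ((k-i : ℕ):ℝ) = ∏ i ∈ range d, ((k:ℝ)-(i:ℝ)) :=
    Finset.prod_congr rfl (fun i hi => by
      rw [Finset.mem_range] at hi
      rw [Nat.cast_sub (by omega)])
  have hmR : (bb (2*k+1) (k+d+1) : ℝ) * (((k:ℝ)+(d:ℝ)+2) * ((k:ℝ)+1) * ∏ i ∈ range d, ((k:ℝ)+2+(i:ℝ)))
      = (bb (2*k) k : ℝ) * ((2*(d:ℝ)+2) * (2*(k:ℝ)+1) * ((k:ℝ)+1) * ∏ i ∈ range d, ((k:ℝ)-(i:ℝ))) := by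
    have h0 := congrArg (fun n : ℕ => (n : ℝ)) hm
    push_cast at h0
    rw [hfix] at h0
    linear_combination h0
  have hPpos : (0:ℝ) < ∏ i ∈ range d, ((k:ℝ)+2+(i:ℝ)) := by
    apply Finset.prod_pos
    intro i _
    positivity
  -- now compute
  have hk1 : ((k:ℝ)+1) ≠ 0 := by positivity
  have key : (bb (2*k+1) (k+d+1) : ℝ) / (bb (2*k) k : ℝ)
      = ((2*(d:ℝ)+2) * (2*(k:ℝ)+1) * ∏ i ∈ range d, ((k:ℝ)-(i:ℝ))) /
        ((((k:ℝ)+(d:ℝ)+2)) * ∏ i ∈ range d, ((k:ℝ)+2+(i:ℝ))) := by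
    rw [div_eq_div_iff hDen.ne' (by positivity)]
    apply mul_left_cancel₀ hk1
    linear_combination hmR
  rw [r, G, Finset.prod_div_distrib, key]
  have hY : (∏ i ∈ range d, ((k:ℝ)+2+(i:ℝ))) ≠ 0 := hPpos.ne'
  have hC : ((k:ℝ)+(d:ℝ)+2) ≠ 0 := by positivity
  field_simp

lemma r_tendsto (d : ℕ) : Tendsto (r d) atTop (nhds (4*(d:ℝ)+4)) := by
  apply (G_tendsto d).congr'
  filter_upwards [eventually_ge_atTop d] with k hk
  exact (r_eq_G hk).symm


end AuxV

open AuxV in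
/-- Proposition 7.1 of the paper: for a uniformly random rational Dyck path
from `(0,0)` to `(k+1, k)`, the expected number of visits to the line
`b − a = d` tends to `4d + 4` as `k → ∞`. -/
theorem expected_visits_tendsto (d : ℕ) :
    Filter.Tendsto
      (fun k : ℕ =>
        (∑ p ∈ DyckPathsToNextToDiag k, (visitsToLine k d p : ℝ)) /
          ((DyckPathsToNextToDiag k).card : ℝ))
      Filter.atTop (nhds (4 * (d : ℝ) + 4)) := by
  have hfun : ∀ k : ℕ,
      (∑ p ∈ DyckPathsToNextToDiag k, (visitsToLine k d p : ℝ)) /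
        ((DyckPathsToNextToDiag k).card : ℝ) = AuxV.r d k := by
    intro k
    rw [AuxV.r]
    congr 1
    · rw [← Nat.cast_sum]
      congr 1
      rw [AuxV.sum_visits_eq, AuxV.sum_vd_eq, AuxV.card_Sd, AuxV.card_W]
    · congr 1
      exact AuxV.card_dyck k
  exact (AuxV.r_tendsto d).congr (fun k => (hfun k).symm)
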